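/- Let S be a numerical semigroup on a compound sequence and fix i in [1,p]. The element a_i·n_i admits both a factorization supported on coordinates ≥ i of length exactly a_i (namely a_i·e_i) and a factorization supported on coordinates ≤ i−1 of length exactly b_i (namely b_i·e_{i−1}); moreover these two types of factorizations are disjointly supported, so a_i·n_i is a Betti element of S. -/

import Mathlib

theorem stmt9 (p : ℕ) (hp : 1 ≤ p) (a b : ℕ → ℕ)
    (ha : ∀ i, 1 ≤ i → i ≤ p → 2 ≤ a i ∧ a i < b i)
    (hab : ∀ i j, 1 ≤ j → j ≤ i → i ≤ p → Nat.gcd (a i) (b j) = 1)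
    (n : ℕ → ℕ)
    (hn : ∀ i, i ≤ p → n i = (∏ j ∈ Finset.Icc 1 i, b j) * ∏ j ∈ Finset.Icc (i+1) p, a j)
    (i : ℕ) (hi1 : 1 ≤ i) (hip : i ≤ p) :
    (∑ j ∈ Finset.range (p+1), (if j = i then a i else 0) * n j = a i * n i) ∧
    (∑ j ∈ Finset.range (p+1), (if j = i then a i else 0) = a i) ∧
    (∑ j ∈ Finset.range (p+1), (if j = i - 1 then b i else 0) * n j = a i * n i) ∧
    (∑ j ∈ Finset.range (p+1), (if j = i - 1 then b i else 0) = b i) ∧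
    (∃ X Y : Set (ℕ → ℕ),
      X ∪ Y = {x : ℕ → ℕ | (∀ j, p < j → x j = 0) ∧
          ∑ j ∈ Finset.range (p+1), x j * n j = a i * n i} ∧
      Disjoint X Y ∧ X.Nonempty ∧ Y.Nonempty ∧
      ∀ x ∈ X, ∀ y ∈ Y, ∀ j, x j * y j = 0) := by
  -- Abbreviations
  set A := ∏ j ∈ Finset.Icc i p, a j with hAdef
  set B := ∏ j ∈ Finset.Icc 1 i, b j with hBdef
  -- A = a i * (rest)
  have hA : A = a i * ∏ j ∈ Finset.Icc (i+1) p, a j := by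
    rw [hAdef, ← Finset.Ico_add_one_right_eq_Icc, ← Finset.Ico_add_one_right_eq_Icc,
      Finset.prod_eq_prod_Ico_succ_bot (by omega : i < p + 1)]
  -- B = (∏_{1..i-1} b) * b i
  have hB : B = (∏ j ∈ Finset.Icc 1 (i-1), b j) * b i := by
    rw [hBdef]
    have h : i = (i - 1) + 1 := by omega
    rw [h, Finset.prod_Icc_succ_top (by omega), ← h]
  -- a i * n i = B * A
  have haini : a i * n i = B * A := by
    rw [hn i hip, hA]; ring
  -- b i * n (i-1) = B * A
  have hbini : b i * n (i-1) = B * A := by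
    have h : i - 1 + 1 = i := by omega
    rw [hn (i-1) (by omega), h, hB]; ring
  -- positivity of n j
  have npos : ∀ j, j ≤ p → 0 < n j := by
    intro j hj
    rw [hn j hj]
    apply Nat.mul_pos
    · apply Finset.prod_pos
      intro k hk
      simp only [Finset.mem_Icc] at hk
      have := ha k hk.1 (le_trans hk.2 hj)
      omega
    · apply Finset.prod_pos
      intro k hk
      simp only [Finset.mem_Icc] at hk
      have := ha k (by omega) hk.2
      omega
  -- divisibility facts
  have hAn : ∀ j, j < i → A ∣ n j := by
    intro j hj
    rw [hn j (by omega)]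
    exact Dvd.dvd.mul_left
      (Finset.prod_dvd_prod_of_subset _ _ _
        (Finset.Icc_subset_Icc (by omega) le_rfl)) _
  have hBn : ∀ j, i ≤ j → j ≤ p → B ∣ n j := by
    intro j hj hjp
    rw [hn j hjp]
    exact Dvd.dvd.mul_right
      (Finset.prod_dvd_prod_of_subset _ _ _
        (Finset.Icc_subset_Icc le_rfl hj)) _
  -- coprimality
  have hcop : Nat.Coprime A B := by
    apply Nat.Coprime.prod_left
    intro k hk
    apply Nat.Coprime.prod_right
    intro j hj
    simp only [Finset.mem_Icc] at hk hj
    exact hab k j hj.1 (le_trans hj.2 hk.1) hk.2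
  -- the four sum identities
  have h1 : ∑ j ∈ Finset.range (p+1), (if j = i then a i else 0) * n j = a i * n i := by
    rw [Finset.sum_eq_single i]
    · simp
    · intro j _ hji; simp [hji]
    · intro h; exact absurd (Finset.mem_range.2 (by omega)) h
  have h2 : ∑ j ∈ Finset.range (p+1), (if j = i then a i else 0) = a i := by
    rw [Finset.sum_ite_eq' (Finset.range (p+1)) i (fun _ => a i)]
    simp [Finset.mem_range]; omega
  have h3 : ∑ j ∈ Finset.range (p+1), (if j = i - 1 then b i else 0) * n j = a i * n i := by
    rw [Finset.sum_eq_single (i-1)]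
    · rw [if_pos rfl, hbini, haini]
    · intro j _ hji; simp [hji]
    · intro h; exact absurd (Finset.mem_range.2 (by omega)) h
  have h4 : ∑ j ∈ Finset.range (p+1), (if j = i - 1 then b i else 0) = b i := by
    rw [Finset.sum_ite_eq' (Finset.range (p+1)) (i-1) (fun _ => b i)]
    simp [Finset.mem_range]; omega
  refine ⟨h1, h2, h3, h4, ?_⟩
  -- the factorization set
  set F : Set (ℕ → ℕ) := {x : ℕ → ℕ | (∀ j, p < j → x j = 0) ∧
      ∑ j ∈ Finset.range (p+1), x j * n j = a i * n i} with hFdef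
  refine ⟨{x | x ∈ F ∧ ∀ j, j < i → x j = 0},
          {x | x ∈ F ∧ ∀ j, i ≤ j → x j = 0}, ?_, ?_, ?_, ?_, ?_⟩
  · -- union is F
    apply Set.eq_of_subset_of_subset
    · rintro x (⟨hx, _⟩ | ⟨hx, _⟩) <;> exact hx
    · intro x hx
      obtain ⟨hx0, hxs⟩ := hx
      -- split the sum
      have hsplit : ∑ j ∈ Finset.range (p+1), x j * n j =
          (∑ j ∈ Finset.Ico 0 i, x j * n j) + ∑ j ∈ Finset.Ico i (p+1), x j * n j := by
        rw [Finset.range_eq_Ico, ← Finset.sum_Ico_consecutive _ (Nat.zero_le i) (by omega)]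
      set L := ∑ j ∈ Finset.Ico 0 i, x j * n j with hLdef
      set R := ∑ j ∈ Finset.Ico i (p+1), x j * n j with hRdef
      have hLR : L + R = A * B := by
        rw [← hsplit, hxs, haini, Nat.mul_comm]
      have hAL : A ∣ L := by
        apply Finset.dvd_sum
        intro j hj
        simp only [Finset.mem_Ico] at hj
        exact Dvd.dvd.mul_left (hAn j hj.2) _
      have hBR : B ∣ R := by
        apply Finset.dvd_sum
        intro j hj
        simp only [Finset.mem_Ico] at hj
        exact Dvd.dvd.mul_left (hBn j hj.1 (by omega)) _
      have hAR : A ∣ R := by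
        have hALR : A ∣ L + R := hLR ▸ Dvd.intro B rfl
        exact (Nat.dvd_add_right hAL).mp hALR
      have hABR : A * B ∣ R := hcop.mul_dvd_of_dvd_of_dvd hAR hBR
      rcases Nat.eq_zero_or_pos R with hR0 | hRpos
      · -- R = 0 : x ∈ Y
        right
        refine ⟨⟨hx0, hxs⟩, ?_⟩
        intro j hj
        rcases Nat.lt_or_ge p j with h | h
        · exact hx0 j h
        · have hmem : j ∈ Finset.Ico i (p+1) := Finset.mem_Ico.mpr ⟨hj, by omega⟩
          have := (Finset.sum_eq_zero_iff.mp hR0) j hmem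
          have := npos j h
          exact Nat.mul_eq_zero.mp (by assumption) |>.resolve_right (by omega)
      · -- R ≥ A*B, so L = 0 : x ∈ X
        have hABle : A * B ≤ R := Nat.le_of_dvd hRpos hABR
        have hL0 : L = 0 := by omega
        left
        refine ⟨⟨hx0, hxs⟩, ?_⟩
        intro j hj
        have hmem : j ∈ Finset.Ico 0 i := Finset.mem_Ico.mpr ⟨Nat.zero_le _, hj⟩
        have := (Finset.sum_eq_zero_iff.mp hL0) j hmem
        have := npos j (by omega)
        exact Nat.mul_eq_zero.mp (by assumption) |>.resolve_right (by omega)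
  · -- disjoint
    rw [Set.disjoint_left]
    rintro x ⟨⟨_, hxs⟩, hxlt⟩ ⟨_, hxge⟩
    have : ∑ j ∈ Finset.range (p+1), x j * n j = 0 := by
      apply Finset.sum_eq_zero
      intro j _
      rcases Nat.lt_or_ge j i with h | h
      · rw [hxlt j h, Nat.zero_mul]
      · rw [hxge j h, Nat.zero_mul]
    have hpos : 0 < a i * n i :=
      Nat.mul_pos (by have := ha i hi1 hip; omega) (npos i hip)
    omega
  · -- X nonempty
    refine ⟨fun j => if j = i then a i else 0, ⟨⟨?_, h1⟩, ?_⟩⟩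
    · intro j hj; simp only [if_neg (by omega : j ≠ i)]
    · intro j hj; simp only [if_neg (by omega : j ≠ i)]
  · -- Y nonempty
    refine ⟨fun j => if j = i - 1 then b i else 0, ⟨⟨?_, h3⟩, ?_⟩⟩
    · intro j hj; simp only [if_neg (by omega : j ≠ i - 1)]
    · intro j hj; simp only [if_neg (by omega : j ≠ i - 1)]
  · -- disjoint supports
    rintro x ⟨_, hxlt⟩ y ⟨_, hyge⟩ j
    rcases Nat.lt_or_ge j i with h | h
    · rw [hxlt j h, Nat.zero_mul]
    · rw [hyge j h, Nat.mul_zero]
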